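/- Let A be an invertible positive operator on a Hilbert space H with spectrum contained in [λ₁, λ₂], where 0 < λ₁ < λ₂ and λ₁, λ₂ ∈ σ(A). Then for every ε > 0 sufficiently small there exists a rank-one orthogonal projection P on H such that ‖A P A^{-1}‖ > (1/(2√2))·(λ₂/λ₁) − ε. -/

import Mathlib

open scoped InnerProductSpace
open Filter Topology

lemma norm_eq_of_spec {H : Type*} [NormedAddCommGroup H] [InnerProductSpace ℂ H]
    [CompleteSpace H] [Nontrivial H] (T : H →L[ℂ] H) (hT : IsSelfAdjoint T) (μ : ℝ) (hμ : 0 ≤ μ)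
    (hmem : (μ : ℂ) ∈ spectrum ℂ T) (hbd : ∀ z ∈ spectrum ℂ T, ‖z‖ ≤ μ) :
    ‖T‖ = μ := by
  have h := hT.spectralRadius_eq_nnnorm
  rw [spectralRadius] at h
  refine le_antisymm ?_ ?_
  · have hle : (⨆ k ∈ spectrum ℂ T, (‖k‖₊ : ENNReal)) ≤ (μ.toNNReal : ENNReal) := by
      refine iSup₂_le fun z hz => ?_
      rw [ENNReal.coe_le_coe]
      have h2 : ((‖z‖₊ : ℝ)).toNNReal ≤ μ.toNNReal := Real.toNNReal_le_toNNReal (hbd z hz)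
      rwa [Real.toNNReal_coe] at h2
    rw [h, ENNReal.coe_le_coe] at hle
    calc ‖T‖ = ((‖T‖₊ : NNReal) : ℝ) := rfl
      _ ≤ (μ.toNNReal : ℝ) := by exact_mod_cast hle
      _ ≤ μ := by simp [Real.coe_toNNReal', max_eq_left hμ]
  · have := spectrum.norm_le_norm_of_mem hmem
    simpa [Complex.norm_real, abs_of_nonneg hμ] using this

lemma pos_shift_bound {H : Type*} [NormedAddCommGroup H] [InnerProductSpace ℂ H]
    [CompleteSpace H] (T : H →L[ℂ] H) (hT : T.IsPositive) (μ : ℝ) (hμ : 0 < μ)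
    (x : H) : μ * ‖x‖ ≤ ‖T x + (μ : ℂ) • x‖ := by
  rcases eq_or_ne x 0 with rfl | hx
  · simp
  have h1 : μ * ‖x‖ ^ 2 ≤ RCLike.re ⟪T x + (μ : ℂ) • x, x⟫_ℂ := by
    rw [inner_add_left, inner_smul_left]
    have hpos : 0 ≤ RCLike.re ⟪T x, x⟫_ℂ := hT.re_inner_nonneg_left x
    have hself : RCLike.re ⟪x, x⟫_ℂ = ‖x‖ ^ 2 := by
      rw [← inner_self_eq_norm_sq (𝕜 := ℂ) x]
    simp only [map_add, Complex.conj_ofReal]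
    have hmul : RCLike.re ((μ : ℂ) * ⟪x, x⟫_ℂ) = μ * RCLike.re ⟪x, x⟫_ℂ :=
      RCLike.re_ofReal_mul μ _
    rw [hmul, hself]
    nlinarith [hpos]
  have h2 : RCLike.re ⟪T x + (μ : ℂ) • x, x⟫_ℂ ≤ ‖T x + (μ : ℂ) • x‖ * ‖x‖ :=
    re_inner_le_norm _ _
  have hxpos : 0 < ‖x‖ := norm_pos_iff.mpr hx
  nlinarith [h1, h2]

lemma approx_eig {H : Type*} [NormedAddCommGroup H] [InnerProductSpace ℂ H]
    [CompleteSpace H] (T : H →L[ℂ] H) (hT : T.IsPositive) (μ : ℝ) (hμ : 0 < μ)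
    (hnorm : ‖T‖ = μ) (η : ℝ) (hη : 0 < η) :
    ∃ g : H, ‖g‖ = 1 ∧ ‖T g - (μ : ℂ) • g‖ ≤ η := by
  set δ : ℝ := min (η ^ 2 / (4 * μ)) μ with hδdef
  have hδ : 0 < δ := lt_min (by positivity) hμ
  have hδ1 : δ ≤ η ^ 2 / (4 * μ) := min_le_left _ _
  have hδ2 : δ ≤ μ := min_le_right _ _
  obtain ⟨g, hg1, hg2⟩ : ∃ g : H, ‖g‖ = 1 ∧ μ - δ < ‖T g‖ := by
    by_contra hcon
    push_neg at hcon
    have hTle : ‖T‖ ≤ μ - δ := by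
      refine ContinuousLinearMap.opNorm_le_bound' T (by linarith) ?_
      intro x hx
      have hx0 : (0:ℝ) < ‖x‖ := lt_of_le_of_ne (norm_nonneg x) (Ne.symm hx)
      have hxn : ‖((‖x‖⁻¹ : ℝ) : ℂ) • x‖ = 1 := by
        rw [norm_smul]
        simp [abs_of_pos hx0]
        field_simp
      have hb := hcon _ hxn
      rw [map_smul, norm_smul] at hb
      simp only [Complex.norm_real, norm_inv, norm_norm] at hb
      calc ‖T x‖ = ‖x‖ * (‖x‖⁻¹ * ‖T x‖) := by field_simp
        _ ≤ ‖x‖ * (μ - δ) := mul_le_mul_of_nonneg_left (by simpa using hb) hx0.le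
        _ = (μ - δ) * ‖x‖ := by ring
    linarith [hnorm ▸ hTle, hδ]
  have hsymm := ContinuousLinearMap.isSelfAdjoint_iff_isSymmetric.mp hT.isSelfAdjoint
  have hTg : ‖T g‖ ≤ μ := by
    calc ‖T g‖ ≤ ‖T‖ * ‖g‖ := T.le_opNorm g
      _ = μ := by rw [hnorm, hg1, mul_one]
  have e1 : ‖T (T g) - ((μ : ℂ) ^ 2) • g‖ ^ 2 ≤ 4 * μ ^ 3 * δ := by
    have hexp := @norm_sub_sq ℂ _ _ _ _ (T (T g)) (((μ : ℂ) ^ 2) • g)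
    have hre : RCLike.re ⟪T (T g), ((μ : ℂ) ^ 2) • g⟫_ℂ = μ ^ 2 * ‖T g‖ ^ 2 := by
      rw [inner_smul_right]
      have hsy : ⟪T (T g), g⟫_ℂ = ⟪T g, T g⟫_ℂ := hsymm (T g) g
      rw [hsy, inner_self_eq_norm_sq_to_K]
      push_cast
      simp [Complex.mul_re, Complex.ofReal_re, Complex.ofReal_im, ← Complex.ofReal_pow]
    have hnTTg : ‖T (T g)‖ ≤ μ ^ 2 := by
      calc ‖T (T g)‖ ≤ ‖T‖ * ‖T g‖ := T.le_opNorm _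
        _ ≤ μ * μ := by rw [hnorm]; exact mul_le_mul_of_nonneg_left hTg hμ.le
        _ = μ ^ 2 := (sq μ).symm
    have hns : ‖((μ : ℂ) ^ 2) • g‖ = μ ^ 2 := by
      rw [norm_smul, hg1, mul_one]
      simp [abs_of_nonneg (sq_nonneg μ)]
    rw [hexp, hre, hns]
    have h5 : μ ^ 2 - ‖T g‖ ^ 2 ≤ 2 * μ * δ := by nlinarith [hg2, hTg, hμ, hδ]
    have h8 : ‖T (T g)‖ * ‖T (T g)‖ ≤ μ ^ 2 * μ ^ 2 :=
      mul_le_mul hnTTg hnTTg (norm_nonneg _) (by positivity)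
    have h9 := mul_le_mul_of_nonneg_left h5 (by positivity : (0:ℝ) ≤ 2 * μ ^ 2)
    nlinarith [h8, h9]
  have e2 : μ * ‖T g - (μ : ℂ) • g‖ ≤ ‖T (T g) - ((μ : ℂ) ^ 2) • g‖ := by
    have hb := pos_shift_bound T hT μ hμ (T g - (μ : ℂ) • g)
    have heq : T (T g - (μ : ℂ) • g) + (μ : ℂ) • (T g - (μ : ℂ) • g)
        = T (T g) - ((μ : ℂ) ^ 2) • g := by
      rw [map_sub, map_smul]
      module
    rwa [heq] at hb
  have hkey : (μ * ‖T g - (μ : ℂ) • g‖) ^ 2 ≤ μ ^ 2 * η ^ 2 := by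
    have h4 : 4 * μ ^ 3 * δ ≤ μ ^ 2 * η ^ 2 := by
      have := mul_le_mul_of_nonneg_left hδ1 (by positivity : (0:ℝ) ≤ 4 * μ ^ 3)
      calc 4 * μ ^ 3 * δ ≤ 4 * μ ^ 3 * (η ^ 2 / (4 * μ)) := this
        _ = μ ^ 2 * η ^ 2 := by field_simp
    nlinarith [e1, e2, norm_nonneg (T (T g) - ((μ : ℂ) ^ 2) • g),
      mul_nonneg hμ.le (norm_nonneg (T g - (μ : ℂ) • g))]
  refine ⟨g, hg1, ?_⟩
  have h6 : ‖T g - (μ : ℂ) • g‖ ^ 2 ≤ η ^ 2 := by nlinarith [hkey, mul_pos hμ hμ]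
  nlinarith [h6, norm_nonneg (T g - (μ : ℂ) • g), hη, sq_nonneg (‖T g - (μ : ℂ) • g‖ - η)]

set_option maxHeartbeats 1000000 in
/-- For an invertible positive operator with spectrum in `[λ₁, λ₂]` attaining the
endpoints, there are rank-one orthogonal projections `P` with
`‖A P A⁻¹‖ > λ₂/(2√2 λ₁) − ε`. -/
theorem stmt9 {H : Type*} [NormedAddCommGroup H] [InnerProductSpace ℂ H]
    [CompleteSpace H] (A B : H →L[ℂ] H) (lam₁ lam₂ : ℝ)
    (hA_pos : A.IsPositive)
    (hAB : A ∘L B = 1) (hBA : B ∘L A = 1)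
    (hlam : 0 < lam₁ ∧ lam₁ < lam₂)
    (hspec : spectrum ℂ A ⊆ (fun t : ℝ => (t : ℂ)) '' Set.Icc lam₁ lam₂)
    (h₁ : (lam₁ : ℂ) ∈ spectrum ℂ A) (h₂ : (lam₂ : ℂ) ∈ spectrum ℂ A) :
    ∃ ε₀ > 0, ∀ ε : ℝ, 0 < ε → ε < ε₀ →
      ∃ (P : H →L[ℂ] H) (e : H), ‖e‖ = 1 ∧ (∀ x : H, P x = ⟪e, x⟫_ℂ • e) ∧
        1 / (2 * Real.sqrt 2) * (lam₂ / lam₁) - ε < ‖A ∘L P ∘L B‖ := by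
  obtain ⟨hl1, hl12⟩ := hlam
  have hl2 : 0 < lam₂ := hl1.trans hl12
  rcases subsingleton_or_nontrivial H with hsub | hnt
  · exfalso
    have hss : Subsingleton (H →L[ℂ] H) :=
      ⟨fun f g => ContinuousLinearMap.ext fun x => Subsingleton.elim _ _⟩
    exact spectrum.mem_iff.mp h₁ (isUnit_of_subsingleton _)
  have hA_sa : IsSelfAdjoint A := hA_pos.isSelfAdjoint
  have hABapp : ∀ x, A (B x) = x := fun x =>
    congrArg (fun T : H →L[ℂ] H => T x) hAB
  have hBAapp : ∀ x, B (A x) = x := fun x =>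
    congrArg (fun T : H →L[ℂ] H => T x) hBA
  have hAsymm := ContinuousLinearMap.isSelfAdjoint_iff_isSymmetric.mp hA_sa
  have hABmul : A * B = 1 := hAB
  have hBAmul : B * A = 1 := hBA
  have hB_sa : IsSelfAdjoint B := by
    have h1 : star B * A = 1 := by
      calc star B * A = star B * star A := by rw [hA_sa.star_eq]
        _ = star (A * B) := (star_mul A B).symm
        _ = 1 := by rw [hABmul, star_one]
    show star B = B
    calc star B = star B * (A * B) := by rw [hABmul, mul_one]
      _ = (star B * A) * B := (mul_assoc _ _ _).symm
      _ = B := by rw [h1, one_mul]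
  have hBsymm := ContinuousLinearMap.isSelfAdjoint_iff_isSymmetric.mp hB_sa
  have hB_pos : B.IsPositive := by
    refine ⟨hBsymm, fun x => ?_⟩
    have h0 : B.reApplyInnerSelf x = RCLike.re ⟪B x, x⟫_ℂ := rfl
    rw [h0]
    have h1 : RCLike.re ⟪B x, x⟫_ℂ = RCLike.re ⟪A (B x), B x⟫_ℂ := by
      conv_rhs => rw [hABapp x]
      exact inner_re_symm _ _
    rw [h1]
    exact hA_pos.re_inner_nonneg_left (B x)
  -- norm of A
  have hbdA : ∀ z ∈ spectrum ℂ A, ‖z‖ ≤ lam₂ := by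
    intro z hz
    obtain ⟨t, ht, rfl⟩ := hspec hz
    simp only [Complex.norm_real, Real.norm_eq_abs]
    rw [abs_of_nonneg (le_trans hl1.le ht.1)]
    exact ht.2
  have normA : ‖A‖ = lam₂ := norm_eq_of_spec A hA_sa lam₂ hl2.le h₂ hbdA
  -- norm of B
  set u : (H →L[ℂ] H)ˣ := ⟨A, B, hABmul, hBAmul⟩ with hudef
  have hmemB : ((lam₁⁻¹ : ℝ) : ℂ) ∈ spectrum ℂ B := by
    have hne : (lam₁ : ℂ) ≠ 0 := by exact_mod_cast hl1.ne'
    have h' := (spectrum.inv_mem_iff (r := Units.mk0 (lam₁ : ℂ) hne) (a := u)).mp h₁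
    have hval : ((u⁻¹ : (H →L[ℂ] H)ˣ) : H →L[ℂ] H) = B := rfl
    have hcast : ((lam₁⁻¹ : ℝ) : ℂ) = ((Units.mk0 (lam₁ : ℂ) hne)⁻¹ : ℂˣ) := by
      simp [Complex.ofReal_inv]
    rw [hcast, ← hval]
    exact h'
  have hbdB : ∀ z ∈ spectrum ℂ B, ‖z‖ ≤ lam₁⁻¹ := by
    intro z hz
    have hBunit : IsUnit B := ⟨u⁻¹, rfl⟩
    have hz0 : z ≠ 0 := by
      rintro rfl
      apply spectrum.mem_iff.mp hz
      simpa using hBunit.neg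
    have hinv : (z⁻¹ : ℂ) ∈ spectrum ℂ A := by
      have hz' : ((Units.mk0 z hz0 : ℂˣ) : ℂ) ∈ spectrum ℂ ((u⁻¹ : (H →L[ℂ] H)ˣ) : H →L[ℂ] H) :=
        hz
      have h' := (spectrum.inv_mem_iff (r := Units.mk0 z hz0) (a := u⁻¹)).mp hz'
      have hval : (((u⁻¹)⁻¹ : (H →L[ℂ] H)ˣ) : H →L[ℂ] H) = A := rfl
      have hcast : (((Units.mk0 z hz0)⁻¹ : ℂˣ) : ℂ) = z⁻¹ := by simp
      rw [← hcast, ← hval]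
      exact h'
    obtain ⟨t, ht, hteq⟩ := hspec hinv
    have hteq' : (t : ℂ) = z⁻¹ := hteq
    have ht0 : 0 < t := lt_of_lt_of_le hl1 ht.1
    have hz_eq : z = ((t : ℂ))⁻¹ := by
      rw [hteq', inv_inv]
    rw [hz_eq, norm_inv]
    simp only [Complex.norm_real, Real.norm_eq_abs]
    rw [abs_of_pos ht0]
    exact inv_anti₀ hl1 ht.1
  have normB : ‖B‖ = lam₁⁻¹ :=
    norm_eq_of_spec B hB_sa lam₁⁻¹ (by positivity) hmemB hbdB
  -- approximate eigenvectors
  set η : ℝ := (lam₂ - lam₁) / (100 * (1 + lam₁ * lam₂)) with hηdef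
  have hηpos : 0 < η := by
    apply div_pos (by linarith)
    positivity
  obtain ⟨g, hg1, hga⟩ := approx_eig A hA_pos lam₂ hl2 normA η hηpos
  obtain ⟨f, hf1, hfb⟩ := approx_eig B hB_pos lam₁⁻¹ (by positivity) normB η hηpos
  have hkey100 : η * (1 + lam₁ * lam₂) = (lam₂ - lam₁) / 100 := by
    rw [hηdef]; field_simp
  -- derived estimates
  have ha' : ‖A f - (lam₁ : ℂ) • f‖ ≤ lam₁ * lam₂ * η := by
    have hne : (lam₁ : ℂ) ≠ 0 := by exact_mod_cast hl1.ne'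
    have heq : A f - (lam₁ : ℂ) • f = (-(lam₁:ℝ) : ℂ) • (A (B f - ((lam₁⁻¹:ℝ) : ℂ) • f)) := by
      rw [map_sub, map_smul, hABapp f]
      push_cast
      match_scalars <;> field_simp
    rw [heq, norm_smul]
    have h3 : ‖A (B f - ((lam₁⁻¹:ℝ) : ℂ) • f)‖ ≤ lam₂ * η := by
      calc ‖A (B f - ((lam₁⁻¹:ℝ) : ℂ) • f)‖ ≤ ‖A‖ * ‖B f - ((lam₁⁻¹:ℝ) : ℂ) • f‖ :=
            A.le_opNorm _
        _ ≤ lam₂ * η := by rw [normA]; exact mul_le_mul_of_nonneg_left hfb hl2.le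
    calc ‖(-(lam₁:ℝ) : ℂ)‖ * ‖A (B f - ((lam₁⁻¹:ℝ) : ℂ) • f)‖
        = lam₁ * ‖A (B f - ((lam₁⁻¹:ℝ) : ℂ) • f)‖ := by
          rw [show (-(lam₁:ℝ) : ℂ) = ((-lam₁ : ℝ) : ℂ) by push_cast; ring,
            Complex.norm_real, Real.norm_eq_abs, abs_neg, abs_of_pos hl1]
      _ ≤ lam₁ * (lam₂ * η) := mul_le_mul_of_nonneg_left h3 hl1.le
      _ = lam₁ * lam₂ * η := by ring
  have hb' : ‖B g - ((lam₂⁻¹:ℝ) : ℂ) • g‖ ≤ η / (lam₁ * lam₂) := by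
    have hne : (lam₂ : ℂ) ≠ 0 := by exact_mod_cast hl2.ne'
    have heq : B g - ((lam₂⁻¹:ℝ) : ℂ) • g = (-(lam₂⁻¹:ℝ) : ℂ) • (B (A g - (lam₂ : ℂ) • g)) := by
      rw [map_sub, map_smul, hBAapp g]
      push_cast
      match_scalars <;> field_simp
    rw [heq, norm_smul]
    have h3 : ‖B (A g - (lam₂ : ℂ) • g)‖ ≤ lam₁⁻¹ * η := by
      calc ‖B (A g - (lam₂ : ℂ) • g)‖ ≤ ‖B‖ * ‖A g - (lam₂ : ℂ) • g‖ := B.le_opNorm _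
        _ ≤ lam₁⁻¹ * η := by rw [normB]; exact mul_le_mul_of_nonneg_left hga (by positivity)
    calc ‖(-(lam₂⁻¹:ℝ) : ℂ)‖ * ‖B (A g - (lam₂ : ℂ) • g)‖
        = lam₂⁻¹ * ‖B (A g - (lam₂ : ℂ) • g)‖ := by
          rw [show (-(lam₂⁻¹:ℝ) : ℂ) = ((-(lam₂⁻¹) : ℝ) : ℂ) by push_cast; ring,
            Complex.norm_real, Real.norm_eq_abs, abs_neg, abs_of_pos (inv_pos.mpr hl2)]
      _ ≤ lam₂⁻¹ * (lam₁⁻¹ * η) := mul_le_mul_of_nonneg_left h3 (by positivity)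
      _ = η / (lam₁ * lam₂) := by rw [div_eq_mul_inv, mul_inv]; ring
  have hreaux : ∀ (r : ℝ) (z : ℂ), RCLike.re ((r : ℂ) * z) = r * RCLike.re z :=
    fun r z => RCLike.re_ofReal_mul r z
  -- near orthogonality
  have hre : |RCLike.re ⟪f, g⟫_ℂ| ≤ 1 / 100 := by
    have hid : ((lam₁ : ℂ) - lam₂) * ⟪f, g⟫_ℂ
        = ⟪f, A g - (lam₂:ℂ) • g⟫_ℂ - ⟪A f - (lam₁:ℂ) • f, g⟫_ℂ := by
      have hfg_symm : ⟪A f, g⟫_ℂ = ⟪f, A g⟫_ℂ := hAsymm f g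
      rw [inner_sub_right, inner_sub_left, inner_smul_right, inner_smul_left,
        Complex.conj_ofReal, ← hfg_symm]
      ring
    have h1 : ‖((lam₁ : ℂ) - lam₂)‖ = lam₂ - lam₁ := by
      rw [show ((lam₁:ℂ) - lam₂) = ((lam₁ - lam₂ : ℝ) : ℂ) by push_cast; ring]
      rw [Complex.norm_real, Real.norm_eq_abs, abs_of_neg (by linarith)]
      ring
    have h2 : ‖⟪f, A g - (lam₂:ℂ) • g⟫_ℂ‖ ≤ η := by
      calc ‖⟪f, A g - (lam₂:ℂ) • g⟫_ℂ‖ ≤ ‖f‖ * ‖A g - (lam₂:ℂ) • g‖ := norm_inner_le_norm _ _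
        _ ≤ η := by rw [hf1, one_mul]; exact hga
    have h3 : ‖⟪A f - (lam₁:ℂ) • f, g⟫_ℂ‖ ≤ lam₁ * lam₂ * η := by
      calc ‖⟪A f - (lam₁:ℂ) • f, g⟫_ℂ‖ ≤ ‖A f - (lam₁:ℂ) • f‖ * ‖g‖ := norm_inner_le_norm _ _
        _ ≤ lam₁ * lam₂ * η := by rw [hg1, mul_one]; exact ha'
    have h4 : (lam₂ - lam₁) * ‖⟪f, g⟫_ℂ‖ ≤ η + lam₁ * lam₂ * η := by
      calc (lam₂ - lam₁) * ‖⟪f, g⟫_ℂ‖ = ‖((lam₁ : ℂ) - lam₂) * ⟪f, g⟫_ℂ‖ := by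
            rw [norm_mul, h1]
        _ = ‖⟪f, A g - (lam₂:ℂ) • g⟫_ℂ - ⟪A f - (lam₁:ℂ) • f, g⟫_ℂ‖ := by rw [hid]
        _ ≤ ‖⟪f, A g - (lam₂:ℂ) • g⟫_ℂ‖ + ‖⟪A f - (lam₁:ℂ) • f, g⟫_ℂ‖ := norm_sub_le _ _
        _ ≤ η + lam₁ * lam₂ * η := add_le_add h2 h3
    have h5 : ‖⟪f, g⟫_ℂ‖ ≤ 1/100 := by
      have hsub : 0 < lam₂ - lam₁ := by linarith
      rw [← mul_le_mul_iff_right₀ hsub]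
      calc (lam₂ - lam₁) * ‖⟪f, g⟫_ℂ‖ ≤ η + lam₁ * lam₂ * η := h4
        _ = η * (1 + lam₁ * lam₂) := by ring
        _ = (lam₂ - lam₁) / 100 := hkey100
        _ = (lam₂ - lam₁) * (1/100) := by ring
    calc |RCLike.re ⟪f, g⟫_ℂ| ≤ ‖⟪f, g⟫_ℂ‖ := RCLike.abs_re_le_norm _
      _ ≤ 1/100 := h5
  -- lower bound for ‖A (f+g)‖
  have herr1 : lam₁ * lam₂ * η + η ≤ lam₂ * (1/100) := by
    have : η + lam₁ * lam₂ * η = (lam₂ - lam₁)/100 := by rw [← hkey100]; ring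
    linarith [this, hl1]
  have hAl : (49/50 : ℝ) * lam₂ ≤ ‖A (f + g)‖ := by
    have hsum : ‖A (f+g) - ((lam₁:ℂ) • f + (lam₂:ℂ) • g)‖ ≤ lam₁*lam₂*η + η := by
      have heq2 : A (f+g) - ((lam₁:ℂ)•f + (lam₂:ℂ)•g)
          = (A f - (lam₁:ℂ)•f) + (A g - (lam₂:ℂ)•g) := by
        rw [map_add]; abel
      rw [heq2]
      exact (norm_add_le _ _).trans (add_le_add ha' hga)
    have h5 : RCLike.re ⟪(lam₁:ℂ)•f + (lam₂:ℂ)•g, g⟫_ℂ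
        = lam₁ * RCLike.re ⟪f,g⟫_ℂ + lam₂ := by
      rw [inner_add_left, inner_smul_left, inner_smul_left, Complex.conj_ofReal,
        Complex.conj_ofReal, map_add, hreaux, hreaux]
      have hgg : RCLike.re ⟪g, g⟫_ℂ = 1 := by
        rw [inner_self_eq_norm_sq (𝕜 := ℂ), hg1]; norm_num
      rw [hgg, mul_one]
    have h4 : RCLike.re ⟪(lam₁:ℂ)•f + (lam₂:ℂ)•g, g⟫_ℂ
        ≤ ‖(lam₁:ℂ)•f + (lam₂:ℂ)•g‖ * ‖g‖ := re_inner_le_norm _ _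
    rw [hg1, mul_one] at h4
    have htri : ‖(lam₁:ℂ)•f + (lam₂:ℂ)•g‖ - ‖A (f+g)‖
        ≤ ‖A (f+g) - ((lam₁:ℂ)•f + (lam₂:ℂ)•g)‖ := by
      have h := norm_sub_norm_le ((lam₁:ℂ)•f + (lam₂:ℂ)•g) (A (f+g))
      rwa [norm_sub_rev] at h
    have hmul := mul_le_mul_of_nonneg_left (abs_le.mp hre).1 hl1.le
    linarith [h4, h5, hsum, htri, hmul, herr1, hl12]
  -- lower bound for ‖B (f+g)‖
  have herr2 : η + η / (lam₁ * lam₂) ≤ lam₁⁻¹ * (1/100) := by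
    have hp : (0:ℝ) < lam₁ * lam₂ := by positivity
    rw [← mul_le_mul_iff_left₀ hp]
    have hLHS : (η + η / (lam₁ * lam₂)) * (lam₁ * lam₂) = η * (1 + lam₁ * lam₂) := by
      field_simp; ring
    have hRHS : lam₁⁻¹ * (1/100) * (lam₁ * lam₂) = lam₂ / 100 := by
      field_simp
    rw [hLHS, hRHS, hkey100]
    linarith
  have hBl : (49/50 : ℝ) * lam₁⁻¹ ≤ ‖B (f + g)‖ := by
    have hsum : ‖B (f+g) - (((lam₁⁻¹:ℝ):ℂ) • f + ((lam₂⁻¹:ℝ):ℂ) • g)‖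
        ≤ η + η / (lam₁ * lam₂) := by
      have heq2 : B (f+g) - (((lam₁⁻¹:ℝ):ℂ)•f + ((lam₂⁻¹:ℝ):ℂ)•g)
          = (B f - ((lam₁⁻¹:ℝ):ℂ)•f) + (B g - ((lam₂⁻¹:ℝ):ℂ)•g) := by
        rw [map_add]; abel
      rw [heq2]
      exact (norm_add_le _ _).trans (add_le_add hfb hb')
    have h5 : RCLike.re ⟪((lam₁⁻¹:ℝ):ℂ)•f + ((lam₂⁻¹:ℝ):ℂ)•g, f⟫_ℂ
        = lam₁⁻¹ + lam₂⁻¹ * RCLike.re ⟪f,g⟫_ℂ := by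
      rw [inner_add_left, inner_smul_left, inner_smul_left, Complex.conj_ofReal,
        Complex.conj_ofReal, map_add, hreaux, hreaux]
      have hff : RCLike.re ⟪f, f⟫_ℂ = 1 := by
        rw [inner_self_eq_norm_sq (𝕜 := ℂ), hf1]; norm_num
      have hsym : RCLike.re ⟪g, f⟫_ℂ = RCLike.re ⟪f, g⟫_ℂ := inner_re_symm _ _
      rw [hff, mul_one, hsym]
    have h4 : RCLike.re ⟪((lam₁⁻¹:ℝ):ℂ)•f + ((lam₂⁻¹:ℝ):ℂ)•g, f⟫_ℂ
        ≤ ‖((lam₁⁻¹:ℝ):ℂ)•f + ((lam₂⁻¹:ℝ):ℂ)•g‖ * ‖f‖ := re_inner_le_norm _ _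
    rw [hf1, mul_one] at h4
    have htri : ‖((lam₁⁻¹:ℝ):ℂ)•f + ((lam₂⁻¹:ℝ):ℂ)•g‖ - ‖B (f+g)‖
        ≤ ‖B (f+g) - (((lam₁⁻¹:ℝ):ℂ)•f + ((lam₂⁻¹:ℝ):ℂ)•g)‖ := by
      have h := norm_sub_norm_le (((lam₁⁻¹:ℝ):ℂ)•f + ((lam₂⁻¹:ℝ):ℂ)•g) (B (f+g))
      rwa [norm_sub_rev] at h
    have hmul := mul_le_mul_of_nonneg_left (abs_le.mp hre).1
      (by positivity : (0:ℝ) ≤ lam₂⁻¹)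
    have hinvle : lam₂⁻¹ ≤ lam₁⁻¹ := by
      apply inv_anti₀ hl1 hl12.le
    linarith [h4, h5, hsum, htri, hmul, herr2, hinvle]
  -- upper bound for ‖f+g‖², and positivity
  have hfg2 : ‖f + g‖ ^ 2 ≤ 101/50 := by
    have hexp := @norm_add_sq ℂ _ _ _ _ f g
    rw [hf1, hg1] at hexp
    rw [hexp]
    nlinarith [(abs_le.mp hre).2]
  have hfg0 : f + g ≠ 0 := by
    intro h0
    rw [h0, map_zero, norm_zero] at hAl
    nlinarith [hAl, hl2]
  have hfgpos : 0 < ‖f + g‖ := norm_pos_iff.mpr hfg0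
  -- the rank-one projection
  set v : H := f + g with hvdef
  set e : H := ((‖v‖⁻¹ : ℝ) : ℂ) • v with hedef
  have he1 : ‖e‖ = 1 := by
    rw [hedef, norm_smul]
    simp [abs_of_pos hfgpos]
    field_simp
  set P : H →L[ℂ] H := (innerSL ℂ e).smulRight e with hPdef
  have hP : ∀ x : H, P x = ⟪e, x⟫_ℂ • e := fun x => rfl
  set C : H →L[ℂ] H := A ∘L P ∘L B with hCdef
  have hCapp : ∀ x, C x = ⟪e, B x⟫_ℂ • A e := by
    intro x
    have : C x = A (P (B x)) := rfl
    rw [this, hP, map_smul]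
  have hAe : ‖A e‖ = ‖v‖⁻¹ * ‖A v‖ := by
    rw [hedef, map_smul, norm_smul]
    simp [abs_of_pos hfgpos]
  have hBe : ‖B e‖ = ‖v‖⁻¹ * ‖B v‖ := by
    rw [hedef, map_smul, norm_smul]
    simp [abs_of_pos hfgpos]
  have hBepos : 0 < ‖B e‖ := by
    rw [hBe]
    have : (0:ℝ) < (49/50 : ℝ) * lam₁⁻¹ := by positivity
    exact mul_pos (by positivity) (lt_of_lt_of_le this hBl)
  have hCBe : C (B e) = (((‖B e‖ : ℝ) : ℂ)) ^ 2 • A e := by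
    rw [hCapp (B e)]
    have hBB : ⟪e, B (B e)⟫_ℂ = ⟪B e, B e⟫_ℂ := (hBsymm e (B e) : ⟪B e, B e⟫_ℂ = _).symm
    rw [hBB, inner_self_eq_norm_sq_to_K]
    norm_cast
  have hCnorm : ‖B e‖ * ‖A e‖ ≤ ‖C‖ := by
    have h := C.le_opNorm (B e)
    rw [hCBe, norm_smul] at h
    have hns : ‖(((‖B e‖ : ℝ) : ℂ)) ^ 2‖ = ‖B e‖ ^ 2 := by
      rw [norm_pow, Complex.norm_real, Real.norm_eq_abs, abs_of_nonneg (norm_nonneg _)]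
    rw [hns] at h
    nlinarith [h, hBepos, norm_nonneg (A e)]
  -- final numeric bound
  have hbound : (2401/5050 : ℝ) * (lam₂ / lam₁) ≤ ‖C‖ := by
    have h1 : ‖B e‖ * ‖A e‖ = ‖A v‖ * ‖B v‖ * (‖v‖⁻¹ * ‖v‖⁻¹) := by
      rw [hAe, hBe]; ring
    have h2 : (49/50 : ℝ) * lam₂ * ((49/50 : ℝ) * lam₁⁻¹) ≤ ‖A v‖ * ‖B v‖ :=
      mul_le_mul hAl hBl (by positivity) (norm_nonneg _)
    have hv2 : ‖v‖ ^ 2 ≤ 101/50 := hfg2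
    have h3 : ‖A v‖ * ‖B v‖ ≤ ‖C‖ * ‖v‖ ^ 2 := by
      have := mul_le_mul_of_nonneg_right hCnorm (sq_nonneg ‖v‖)
      calc ‖A v‖ * ‖B v‖ = ‖B e‖ * ‖A e‖ * ‖v‖ ^ 2 := by
            rw [hAe, hBe]; field_simp
        _ ≤ ‖C‖ * ‖v‖ ^ 2 := this
    have hCnn : (0:ℝ) ≤ ‖C‖ := norm_nonneg _
    have h4 : (49/50 : ℝ) * lam₂ * ((49/50 : ℝ) * lam₁⁻¹) ≤ ‖C‖ * (101/50) := by
      calc (49/50 : ℝ) * lam₂ * ((49/50 : ℝ) * lam₁⁻¹) ≤ ‖A v‖ * ‖B v‖ := h2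
        _ ≤ ‖C‖ * ‖v‖ ^ 2 := h3
        _ ≤ ‖C‖ * (101/50) := mul_le_mul_of_nonneg_left hv2 hCnn
    have hdiv : (lam₂ / lam₁ : ℝ) = lam₂ * lam₁⁻¹ := by rw [div_eq_mul_inv]
    rw [hdiv]
    nlinarith [h4]
  have hconst : 1 / (2 * Real.sqrt 2) ≤ (2401/5050 : ℝ) := by
    have hs2 : Real.sqrt 2 ^ 2 = 2 := Real.sq_sqrt (by norm_num)
    have hsnn : 0 ≤ Real.sqrt 2 := Real.sqrt_nonneg 2
    have hspos : 0 < Real.sqrt 2 := by nlinarith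
    rw [div_le_iff₀ (by positivity)]
    nlinarith [hs2, hsnn]
  refine ⟨1, one_pos, fun ε hε _ => ⟨P, e, he1, hP, ?_⟩⟩
  have hr : (0:ℝ) < lam₂ / lam₁ := by positivity
  have := mul_le_mul_of_nonneg_right hconst hr.le
  calc 1 / (2 * Real.sqrt 2) * (lam₂ / lam₁) - ε
      < 1 / (2 * Real.sqrt 2) * (lam₂ / lam₁) := by linarith
    _ ≤ (2401/5050 : ℝ) * (lam₂ / lam₁) := this
    _ ≤ ‖C‖ := hbound
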